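/- Let p be an odd prime, f even with f ∣ p−1, g a primitive root modulo p² with Fermat quotient q_p(g) = 1, and b any integer with 0 ≤ b < fp. Let v ∈ {1, 2, …, p−1} and V_v = {v, v+p, …, v+(p−1)p}. If v ∈ Q_b then |V_v ∩ C_0| = (p−1)/2 and |V_v ∩ C_1| = (p+1)/2; if v ∈ N_b then |V_v ∩ C_0| = (p+1)/2 and |V_v ∩ C_1| = (p−1)/2. -/

import Mathlib

open Polynomial Finset

/-- The Fermat quotient `q_p(u) ∈ {0,…,p-1}`, with `q_p(u) ≡ (u^(p-1)-1)/p (mod p)`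
for `gcd(u,p)=1`, and `q_p(u)=0` if `p ∣ u`. -/
def qp (p u : ℕ) : ℕ := if u % p = 0 then 0 else (u ^ (p - 1) - 1) / p % p

/-- The generalized cyclotomic class `D_l^{(p^j, f)} = {g^(l + k·f·p^(j-1)) mod p^j : 0 ≤ k < e}`
where `e = (p-1)/f`. -/
def Dcl (p f g j l : ℕ) : Finset ℕ :=
  (Finset.range ((p - 1) / f)).image (fun k => g ^ (l + k * f * p ^ (j - 1)) % p ^ j)

/-- The class `D_l = {u : 0 ≤ u < p², gcd(u,p)=1, q_p(u)=l}` defined via Fermat quotients. -/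
def Dq (p l : ℕ) : Finset ℕ :=
  (Finset.range (p ^ 2)).filter (fun u => u % p ≠ 0 ∧ qp p u = l)

/-- `C_0 = ⋃_{i=f/2}^{f-1} p·D_{(i+b mod f)}^{(p,f)} ∪ ⋃_{i=pf/2}^{pf-1} D_{(i+b mod pf)}^{(p²,f)}`. -/
def C0 (p f g b : ℕ) : Finset ℕ :=
  ((Finset.Ico (f / 2) f).biUnion
      (fun i => (Dcl p f g 1 ((i + b) % f)).image (fun v => p * v))) ∪
  ((Finset.Ico (p * f / 2) (p * f)).biUnion (fun i => Dcl p f g 2 ((i + b) % (p * f))))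

/-- `C_1 = ⋃_{i=0}^{f/2-1} p·D_{(i+b mod f)}^{(p,f)} ∪ ⋃_{i=0}^{pf/2-1} D_{(i+b mod pf)}^{(p²,f)} ∪ {0}`. -/
def C1 (p f g b : ℕ) : Finset ℕ :=
  ((Finset.range (f / 2)).biUnion
      (fun i => (Dcl p f g 1 ((i + b) % f)).image (fun v => p * v))) ∪
  ((Finset.range (p * f / 2)).biUnion (fun i => Dcl p f g 2 ((i + b) % (p * f)))) ∪ {0}

/-- The binary sequence `(s_n)` of period `p²`: `s_n = 1` iff `n mod p² ∈ C_1`. -/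
def seqS (p f g b : ℕ) (n : ℕ) : ZMod 2 :=
  if n % p ^ 2 ∈ C1 p f g b then 1 else 0

/-- Generating polynomial `S(X) = Σ_{n<T} s_n X^n ∈ F₂[X]`. -/
noncomputable def genPoly (T : ℕ) (s : ℕ → ZMod 2) : Polynomial (ZMod 2) :=
  ∑ n ∈ Finset.range T, Polynomial.C (s n) * Polynomial.X ^ n

/-- Linear complexity over `F₂` of a `T`-periodic sequence:
`LC = T - deg gcd(X^T - 1, S(X))`. -/
noncomputable def LC (T : ℕ) (s : ℕ → ZMod 2) : ℕ :=
  T - (EuclideanDomain.gcd (Polynomial.X ^ T - 1) (genPoly T s)).natDegree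

/-- The `k`-error linear complexity over `F₂`: the minimum linear complexity obtainable
by changing at most `k` terms of the sequence per period. -/
noncomputable def errLC (T k : ℕ) (s : ℕ → ZMod 2) : ℕ :=
  sInf { L | ∃ t : ℕ → ZMod 2,
    ((Finset.range T).filter (fun n => t n ≠ s n)).card ≤ k ∧ L = LC T t }

/-- `g` is a primitive root modulo `m`: its multiplicative order in `ZMod m` is `φ(m)`. -/
def isPrimRoot (g m : ℕ) : Prop := orderOf (g : ZMod m) = Nat.totient m

/-- `Q_b = ⋃_{i=0}^{f/2-1} D_{(i+b mod f)}^{(p,f)} ⊆ {1,…,p-1}`. -/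
def Qb (p f g b : ℕ) : Finset ℕ :=
  (Finset.range (f / 2)).biUnion (fun i => Dcl p f g 1 ((i + b) % f))

/-- `N_b = {1,…,p-1} \ Q_b`. -/
def Nb (p f g b : ℕ) : Finset ℕ := (Finset.Ico 1 p) \ Qb p f g b

/-- `V_v = {v, v+p, v+2p, …, v+(p-1)p}`. -/
def Vset (p v : ℕ) : Finset ℕ := (Finset.range p).image (fun i => v + i * p)

/-- for `v ∈ {1,…,p-1}`: if `v ∈ Q_b` then `|V_v ∩ C_0| = (p-1)/2` and
`|V_v ∩ C_1| = (p+1)/2`; if `v ∈ N_b` then `|V_v ∩ C_0| = (p+1)/2` and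
`|V_v ∩ C_1| = (p-1)/2`. -/
lemma natcast_inj_of_lt {n a b : ℕ} (ha : a < n) (hb : b < n) (h : (a : ZMod n) = b) : a = b :=
  ((ZMod.natCast_eq_natCast_iff a b n).mp h).eq_of_lt_of_lt ha hb

lemma exists_pow_lt' {G : Type*} [Group G] [Fintype G] (a x : G)
    (ha : orderOf a = Fintype.card G) : ∃ n < orderOf a, a ^ n = x := by
  have hx : x ∈ Subgroup.zpowers a := by
    have hcard : Nat.card (Subgroup.zpowers a) = Nat.card G := by
      rw [Nat.card_zpowers, ha, Nat.card_eq_fintype_card]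
    rw [Subgroup.eq_top_of_card_eq _ hcard]
    trivial
  rw [← mem_powers_iff_mem_zpowers, Submonoid.mem_powers_iff] at hx
  obtain ⟨n, hn⟩ := hx
  exact ⟨n % orderOf a, Nat.mod_lt _ (orderOf_pos a), by rw [pow_mod_orderOf, hn]⟩

lemma mem_Dcl_iff (p f g : ℕ) (j l n : ℕ) (hp : 0 < p) (hf : 0 < f)
    (he : 0 < (p - 1) / f)
    (hT : orderOf (g : ZMod (p ^ j)) = (p - 1) / f * (f * p ^ (j - 1)))
    (hl : l < f * p ^ (j - 1)) (hn : n < (p - 1) / f * (f * p ^ (j - 1))) :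
    g ^ n % p ^ j ∈ Dcl p f g j l ↔ n % (f * p ^ (j - 1)) = l := by
  set e := (p - 1) / f with hedef
  set F := f * p ^ (j - 1) with hFdef
  have hF : 0 < F := Nat.mul_pos hf (pow_pos hp _)
  have hT0 : orderOf (g : ZMod (p ^ j)) ≠ 0 := by rw [hT]; positivity
  have hgu : IsUnit (g : ZMod (p ^ j)) :=
    IsUnit.of_pow_eq_one (pow_orderOf_eq_one _) hT0
  have hcoe : (hgu.unit : ZMod (p ^ j)) = (g : ZMod (p ^ j)) := hgu.unit_spec
  have hord : orderOf hgu.unit = e * F := by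
    rw [← orderOf_units (y := hgu.unit), hcoe, hT]
  constructor
  · intro hmem
    rw [Dcl, mem_image] at hmem
    obtain ⟨k, hk, hkeq⟩ := hmem
    rw [mem_range] at hk
    have h1 : ((g : ZMod (p ^ j))) ^ (l + k * F) = (g : ZMod (p ^ j)) ^ n := by
      have h0 := congrArg (fun t : ℕ => (t : ZMod (p ^ j))) hkeq
      simp only [ZMod.natCast_mod, Nat.cast_pow] at h0
      rw [← h0, hFdef]; ring_nf
    have h2 : hgu.unit ^ (l + k * F) = hgu.unit ^ n :=
      Units.ext (by simpa [hcoe] using h1)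
    have h3 := pow_eq_pow_iff_modEq.mp h2
    rw [hord] at h3
    have hlt1 : l + k * F < e * F := by
      calc l + k * F < F + k * F := by omega
        _ = (k + 1) * F := by ring
        _ ≤ e * F := Nat.mul_le_mul_right _ hk
    have h4 : l + k * F = n := h3.eq_of_lt_of_lt hlt1 hn
    rw [← h4, Nat.add_mul_mod_self_right, Nat.mod_eq_of_lt hl]
  · intro hmod
    rw [Dcl, mem_image]
    refine ⟨n / F, mem_range.mpr ((Nat.div_lt_iff_lt_mul hF).mpr hn), ?_⟩
    have h5 : l + n / F * f * p ^ (j - 1) = n := by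
      have hdm : F * (n / F) + n % F = n := Nat.div_add_mod n F
      have hcm : n / F * F = F * (n / F) := Nat.mul_comm _ _
      rw [hmod] at hdm
      rw [mul_assoc, ← hFdef]
      omega
    rw [h5]

lemma shift_count (M b A lo hi : ℕ) (hM : 0 < M) (hhi : hi ≤ M) :
    (∃ i, (lo ≤ i ∧ i < hi) ∧ A % M = (i + b) % M) ↔
      (lo ≤ (A + (M - b % M)) % M ∧ (A + (M - b % M)) % M < hi) := by
  set c := (A + (M - b % M)) % M with hc
  have hbM : b % M < M := Nat.mod_lt _ hM
  have hcM : c < M := Nat.mod_lt _ hM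
  have hkey : (c + b) % M = A % M := by
    have e1 : c + b ≡ (A + (M - b % M)) + b [MOD M] :=
      Nat.ModEq.add_right b (Nat.mod_modEq _ M)
    have e2 : (A + (M - b % M)) + b ≡ (A + (M - b % M)) + b % M [MOD M] :=
      Nat.ModEq.add_left _ (Nat.mod_modEq b M).symm
    have e3 : (A + (M - b % M)) + b % M = A + M := by omega
    have e4 : A + M ≡ A [MOD M] := by
      unfold Nat.ModEq; rw [Nat.add_mod_right]
    exact (e1.trans (e2.trans (e3 ▸ e4)))
  constructor
  · rintro ⟨i, ⟨hlo, hih⟩, hAi⟩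
    have hiM : i < M := lt_of_lt_of_le hih hhi
    have h1 : c + b ≡ i + b [MOD M] := by
      unfold Nat.ModEq
      rw [hkey, hAi]
    have h2 : c = i := (h1.add_right_cancel' b).eq_of_lt_of_lt hcM hiM
    exact ⟨h2 ▸ hlo, h2 ▸ hih⟩
  · rintro ⟨h1, h2⟩
    exact ⟨c, ⟨h1, h2⟩, hkey.symm⟩

lemma count_mod_card (f a q t : ℕ) (ha : a < f) (ht : t ≤ f) :
    ((range (q * f + t)).filter (fun r => r % f = a)).card
      = if a < t then q + 1 else q := by
  have hf : 0 < f := lt_of_le_of_lt (Nat.zero_le a) ha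
  have himg : (range (q * f + t)).filter (fun r => r % f = a)
      = (range (if a < t then q + 1 else q)).image (fun s => a + s * f) := by
    ext r
    simp only [mem_filter, mem_range, mem_image]
    constructor
    · rintro ⟨hr, hmod⟩
      have hdm : f * (r / f) + r % f = r := Nat.div_add_mod r f
      refine ⟨r / f, ?_, by rw [mul_comm]; omega⟩
      by_cases hat : a < t
      · rw [if_pos hat]
        refine (Nat.div_lt_iff_lt_mul hf).mpr (lt_of_lt_of_le hr ?_)
        calc q * f + t ≤ q * f + f := by omega
          _ = (q + 1) * f := by ring
      · rw [if_neg hat]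
        by_contra hq
        push_neg at hq
        have h1 : f * q ≤ f * (r / f) := Nat.mul_le_mul_left f hq
        have h2 : f * q = q * f := by ring
        omega
    · rintro ⟨s, hs, rfl⟩
      constructor
      · by_cases hat : a < t
        · rw [if_pos hat] at hs
          have h1 : s ≤ q := by omega
          have h2 : s * f ≤ q * f := Nat.mul_le_mul_right f h1
          omega
        · rw [if_neg hat] at hs
          have h1 : s + 1 ≤ q := hs
          have h2 : (s + 1) * f ≤ q * f := Nat.mul_le_mul_right f h1
          have h3 : (s + 1) * f = s * f + f := by ring
          omega
      · rw [Nat.add_mul_mod_self_right, Nat.mod_eq_of_lt ha]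
  rw [himg, card_image_of_injective _ ?_, card_range]
  intro x y h
  simp only at h
  exact Nat.eq_of_mul_eq_mul_right hf (by omega)

theorem stmt16 (p f g b v : ℕ) (hp : p.Prime) (hodd : Odd p)
    (hf : Even f) (hfpos : 0 < f) (hfd : f ∣ p - 1)
    (hg : isPrimRoot g (p ^ 2)) (hqg : qp p g = 1)
    (hb : b < f * p) (hv1 : 1 ≤ v) (hvp : v ≤ p - 1) :
    (v ∈ Qb p f g b →
      (Vset p v ∩ C0 p f g b).card = (p - 1) / 2 ∧
      (Vset p v ∩ C1 p f g b).card = (p + 1) / 2) ∧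
    (v ∈ Nb p f g b →
      (Vset p v ∩ C0 p f g b).card = (p + 1) / 2 ∧
      (Vset p v ∩ C1 p f g b).card = (p - 1) / 2) := by
  classical
  have hp2 : 2 ≤ p := hp.two_le
  obtain ⟨s, hps⟩ := hodd
  obtain ⟨t, hft⟩ := hf
  have hp3 : 3 ≤ p := by omega
  set e := (p - 1) / f with hedef
  have hef : e * f = p - 1 := Nat.div_mul_cancel hfd
  have he : 0 < e := by
    rcases Nat.eq_zero_or_pos e with h | h
    · rw [h] at hef; omega
    · exact h
  set M := p * f with hMdef
  have hM : 0 < M := by rw [hMdef]; exact Nat.mul_pos (by omega) hfpos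
  have hfM : f ∣ M := ⟨p, by rw [hMdef]; ring⟩
  have hvlt : v < p := by omega
  haveI : Fact p.Prime := ⟨hp⟩
  haveI : NeZero (p ^ 2) := ⟨pow_ne_zero _ (by omega)⟩
  -- order of g mod p^2
  have hN : Nat.totient (p ^ 2) = p * (p - 1) := by
    rw [Nat.totient_prime_pow hp (by norm_num)]
    norm_num
  have hgz : orderOf (g : ZMod (p ^ 2)) = p * (p - 1) := by
    rw [isPrimRoot] at hg; rw [hg, hN]
  have hgzu : IsUnit (g : ZMod (p ^ 2)) :=
    IsUnit.of_pow_eq_one (pow_orderOf_eq_one _) (by rw [hgz]; exact Nat.mul_ne_zero (by omega) (by omega))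
  have hgucoe : (hgzu.unit : ZMod (p ^ 2)) = (g : ZMod (p ^ 2)) := hgzu.unit_spec
  have hguord : orderOf hgzu.unit = p * (p - 1) := by
    rw [← orderOf_units (y := hgzu.unit), hgucoe, hgz]
  -- g coprime to p
  have hgcop2 : Nat.Coprime g (p ^ 2) := (ZMod.isUnit_iff_coprime g (p ^ 2)).mp hgzu
  have hgcop : Nat.Coprime g p :=
    Nat.Coprime.coprime_dvd_right (dvd_pow_self p (by norm_num)) hgcop2
  have hgpu : IsUnit (g : ZMod p) := (ZMod.isUnit_iff_coprime g p).mpr hgcop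
  have hgpne : (g : ZMod p) ≠ 0 := hgpu.ne_zero
  have hgppow : (g : ZMod p) ^ (p - 1) = 1 := ZMod.pow_card_sub_one_eq_one hgpne
  -- order of g mod p is p - 1
  have hgpord : orderOf (g : ZMod p) = p - 1 := by
    set d := orderOf (g : ZMod p) with hd
    have hdvd : d ∣ p - 1 := orderOf_dvd_of_pow_eq_one hgppow
    have hd1 : (g : ZMod p) ^ d = 1 := pow_orderOf_eq_one _
    have hnat : (g : ℕ) ^ d ≡ 1 [MOD p] := by
      rw [← ZMod.natCast_eq_natCast_iff]
      push_cast
      exact hd1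
    have hint : (p : ℤ) ∣ (g : ℤ) ^ d - 1 := by
      have h1 := hnat.dvd
      have h2 := dvd_neg.mpr h1
      push_cast at h2 ⊢
      convert h2 using 1
      · rfl
      · ring
    have hint2 : ((p : ℤ)) ^ 2 ∣ ((g : ℤ) ^ d) ^ p - 1 := by
      have h3 := dvd_sub_pow_of_dvd_sub hint 1
      simpa using h3
    have hz2 : ((g : ZMod (p ^ 2))) ^ (d * p) = 1 := by
      have h3 : ((((g : ℤ) ^ d) ^ p - 1 : ℤ) : ZMod (p ^ 2)) = 0 := by
        rw [ZMod.intCast_zmod_eq_zero_iff_dvd]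
        exact_mod_cast hint2
      push_cast at h3
      rw [sub_eq_zero] at h3
      rw [pow_mul]
      exact_mod_cast h3
    have hu2 : hgzu.unit ^ (d * p) = 1 := by
      apply Units.ext
      rw [Units.val_pow_eq_pow_val, hgucoe, hz2, Units.val_one]
    have hdvd2 : p * (p - 1) ∣ d * p := hguord ▸ orderOf_dvd_of_pow_eq_one hu2
    have hdvd3 : p - 1 ∣ d := by
      have h4 : p * (p - 1) ∣ p * d := by rwa [mul_comm d p] at hdvd2
      exact (mul_dvd_mul_iff_left (show p ≠ 0 by omega)).mp h4
    exact Nat.dvd_antisymm hdvd hdvd3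
  have hgpucoe : (hgpu.unit : ZMod p) = (g : ZMod p) := hgpu.unit_spec
  have hgpuord : orderOf hgpu.unit = p - 1 := by
    rw [← orderOf_units (y := hgpu.unit), hgpucoe, hgpord]
  -- v as a power of g mod p
  have hvcopn : Nat.Coprime v p :=
    Nat.coprime_comm.mp (hp.coprime_iff_not_dvd.mpr
      (fun hdv => by have := Nat.le_of_dvd (by omega) hdv; omega))
  have hvu : IsUnit (v : ZMod p) := (ZMod.isUnit_iff_coprime v p).mpr hvcopn
  obtain ⟨m, hmlt, hmu⟩ := exists_pow_lt' hgpu.unit hvu.unit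
    (by rw [hgpuord, ZMod.card_units])
  rw [hgpuord] at hmlt
  have hm' : (g : ZMod p) ^ m = (v : ZMod p) := by
    have h0 := congrArg (Units.val) hmu
    rw [Units.val_pow_eq_pow_val, hgpucoe, hvu.unit_spec] at h0
    exact h0
  -- specialized Dcl membership criteria
  have hpf2 : f * p ^ (2 - 1) = M := by rw [hMdef]; norm_num [Nat.mul_comm]
  have hT2 : orderOf (g : ZMod (p ^ 2)) = (p - 1) / f * (f * p ^ (2 - 1)) := by
    rw [hgz, hpf2, ← hedef, hMdef, mul_left_comm e p f, hef]
  have hEF2 : (p - 1) / f * (f * p ^ (2 - 1)) = p * (p - 1) := by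
    rw [hpf2, ← hedef, hMdef, mul_left_comm e p f, hef]
  have hD2 : ∀ l n : ℕ, l < M → n < p * (p - 1) →
      (g ^ n % p ^ 2 ∈ Dcl p f g 2 l ↔ n % M = l) := by
    intro l n hl hn
    have h := mem_Dcl_iff p f g 2 l n (by omega) hfpos he hT2
      (by rw [hpf2]; exact hl) (by rw [hEF2]; exact hn)
    rwa [hpf2] at h
  have hpf1 : f * p ^ (1 - 1) = f := by norm_num
  have hT1 : orderOf (g : ZMod (p ^ 1)) = (p - 1) / f * (f * p ^ (1 - 1)) := by
    rw [hpf1, pow_one, hgpord, ← hedef, hef]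
  have hD1 : ∀ l n : ℕ, l < f → n < p - 1 →
      (g ^ n % p ∈ Dcl p f g 1 l ↔ n % f = l) := by
    intro l n hl hn
    have h := mem_Dcl_iff p f g 1 l n (by omega) hfpos he hT1
      (by rw [hpf1]; exact hl)
      (by rw [hpf1, ← hedef, hef]; exact hn)
    rwa [hpf1, pow_one] at h
  -- the parametrization of V_v
  set xj : ℕ → ℕ := fun j => g ^ (m + j * (p - 1)) % p ^ 2 with hxj
  have hp2pos : 0 < p ^ 2 := by positivity
  have hppdvd : p ∣ p ^ 2 := dvd_pow_self p (by norm_num)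
  have hxmod : ∀ j : ℕ, xj j % p = v := by
    intro j
    simp only [hxj]
    have h1 : g ^ (m + j * (p - 1)) % p ^ 2 % p = g ^ (m + j * (p - 1)) % p :=
      Nat.mod_mod_of_dvd _ hppdvd
    have hcast : ((g ^ (m + j * (p - 1)) % p : ℕ) : ZMod p) = (v : ZMod p) := by
      rw [ZMod.natCast_mod]
      push_cast
      rw [pow_add, mul_comm j (p - 1), pow_mul, hgppow, one_pow, mul_one, hm']
    have h2 : g ^ (m + j * (p - 1)) % p = v :=
      natcast_inj_of_lt (Nat.mod_lt _ (by omega)) hvlt hcast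
    rw [h1, h2]
  have hnlt : ∀ j : ℕ, j < p → m + j * (p - 1) < p * (p - 1) := by
    intro j hj
    have h1 : (j + 1) * (p - 1) ≤ p * (p - 1) := Nat.mul_le_mul_right _ hj
    have h2 : (j + 1) * (p - 1) = j * (p - 1) + (p - 1) := by ring
    omega
  have hinjOn : Set.InjOn xj (range p) := by
    intro j hj j' hj' hjj
    simp only [coe_range, Set.mem_Iio] at hj hj'
    simp only [hxj] at hjj
    have hc := congrArg (fun t : ℕ => (t : ZMod (p ^ 2))) hjj
    simp only [ZMod.natCast_mod, Nat.cast_pow] at hc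
    have hu : hgzu.unit ^ (m + j * (p - 1)) = hgzu.unit ^ (m + j' * (p - 1)) := by
      apply Units.ext
      rw [Units.val_pow_eq_pow_val, Units.val_pow_eq_pow_val, hgucoe]
      exact hc
    have hmm := pow_eq_pow_iff_modEq.mp hu
    rw [hguord] at hmm
    have heq : m + j * (p - 1) = m + j' * (p - 1) :=
      hmm.eq_of_lt_of_lt (hnlt j hj) (hnlt j' hj')
    exact Nat.eq_of_mul_eq_mul_right (show 0 < p - 1 by omega)
      (by omega : j * (p - 1) = j' * (p - 1))
  have hvinj : Function.Injective (fun i : ℕ => v + i * p) := by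
    intro a b hab
    simp only at hab
    exact Nat.eq_of_mul_eq_mul_right (show 0 < p by omega) (by omega)
  have hVc : (Vset p v).card = p := by
    rw [Vset, card_image_of_injective _ hvinj, card_range]
  have hVv : Vset p v = (range p).image xj := by
    have hsub : (range p).image xj ⊆ Vset p v := by
      intro x hx
      rw [mem_image] at hx
      obtain ⟨j, hj, rfl⟩ := hx
      rw [Vset, mem_image]
      have hxlt : xj j < p ^ 2 := by
        simp only [hxj]
        exact Nat.mod_lt _ hp2pos
      refine ⟨xj j / p, mem_range.mpr ?_, ?_⟩
      · refine (Nat.div_lt_iff_lt_mul (show 0 < p by omega)).mpr ?_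
        calc xj j < p ^ 2 := hxlt
          _ = p * p := pow_two p
      · have hdm : p * (xj j / p) + xj j % p = xj j := Nat.div_add_mod _ p
        have hcm : xj j / p * p = p * (xj j / p) := Nat.mul_comm _ _
        rw [hxmod j] at hdm
        omega
    have hcx : ((range p).image xj).card = p := by
      rw [card_image_of_injOn hinjOn, card_range]
    exact (eq_of_subset_of_card_le hsub (hVc.le.trans hcx.ge)).symm
  -- the index function
  set rfun : ℕ → ℕ := fun j => (m + j * (p - 1) + (M - b % M)) % M with hrfun
  have hrlt : ∀ j : ℕ, rfun j < M := by
    intro j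
    simp only [hrfun]
    exact Nat.mod_lt _ hM
  have hchar1 : ∀ j ∈ range p, (xj j ∈ C1 p f g b ↔ rfun j < M / 2) := by
    intro j hj
    rw [mem_range] at hj
    have hshift := shift_count M b (m + j * (p - 1)) 0 (M / 2) hM (Nat.div_le_self _ _)
    simp only [hrfun]
    constructor
    · intro hx
      simp only [C1, mem_union] at hx
      rcases hx with (hx | hx) | hx
      · exfalso
        rw [mem_biUnion] at hx
        obtain ⟨i, _, hxi⟩ := hx
        rw [mem_image] at hxi
        obtain ⟨w, _, hpw⟩ := hxi
        have h0 := hxmod j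
        rw [← hpw, Nat.mul_mod_right] at h0
        omega
      · rw [mem_biUnion] at hx
        obtain ⟨i, hi, hxi⟩ := hx
        rw [mem_range] at hi
        have hxi' : g ^ (m + j * (p - 1)) % p ^ 2 ∈ Dcl p f g 2 ((i + b) % M) := by
          simpa only [hxj] using hxi
        have hcond := (hD2 ((i + b) % M) (m + j * (p - 1))
          (Nat.mod_lt _ hM) (hnlt j hj)).mp hxi'
        exact (hshift.mp ⟨i, ⟨Nat.zero_le _, hi⟩, hcond⟩).2
      · exfalso
        rw [mem_singleton] at hx
        have h0 := hxmod j
        rw [hx, Nat.zero_mod] at h0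
        omega
    · intro hr
      obtain ⟨i, ⟨_, hi⟩, hcond⟩ := hshift.mpr ⟨Nat.zero_le _, hr⟩
      simp only [C1, mem_union]
      refine Or.inl (Or.inr ?_)
      rw [mem_biUnion]
      refine ⟨i, mem_range.mpr hi, ?_⟩
      have := (hD2 ((i + b) % M) (m + j * (p - 1))
        (Nat.mod_lt _ hM) (hnlt j hj)).mpr hcond
      simpa only [hxj] using this
  have hchar0 : ∀ j ∈ range p, (xj j ∈ C0 p f g b ↔ ¬ rfun j < M / 2) := by
    intro j hj
    rw [mem_range] at hj
    have hshift := shift_count M b (m + j * (p - 1)) (M / 2) M hM le_rfl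
    simp only [hrfun]
    constructor
    · intro hx
      simp only [C0, mem_union] at hx
      rcases hx with hx | hx
      · exfalso
        rw [mem_biUnion] at hx
        obtain ⟨i, _, hxi⟩ := hx
        rw [mem_image] at hxi
        obtain ⟨w, _, hpw⟩ := hxi
        have h0 := hxmod j
        rw [← hpw, Nat.mul_mod_right] at h0
        omega
      · rw [mem_biUnion] at hx
        obtain ⟨i, hi, hxi⟩ := hx
        rw [mem_Ico] at hi
        have hxi' : g ^ (m + j * (p - 1)) % p ^ 2 ∈ Dcl p f g 2 ((i + b) % M) := by
          simpa only [hxj] using hxi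
        have hcond := (hD2 ((i + b) % M) (m + j * (p - 1))
          (Nat.mod_lt _ hM) (hnlt j hj)).mp hxi'
        have h1 := (hshift.mp ⟨i, hi, hcond⟩).1
        omega
    · intro hr
      push_neg at hr
      obtain ⟨i, hi, hcond⟩ := hshift.mpr ⟨hr, by simpa only [hrfun] using hrlt j⟩
      simp only [C0, mem_union]
      right
      rw [mem_biUnion]
      refine ⟨i, mem_Ico.mpr hi, ?_⟩
      have := (hD2 ((i + b) % M) (m + j * (p - 1))
        (Nat.mod_lt _ hM) (hnlt j hj)).mpr hcond
      simpa only [hxj] using this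
  -- intersection cardinalities as filters
  have hIC : ∀ W : Finset ℕ, (Vset p v ∩ W).card
      = ((range p).filter (fun j => xj j ∈ W)).card := by
    intro W
    rw [hVv]
    have himg : (range p).image xj ∩ W = ((range p).filter (fun j => xj j ∈ W)).image xj := by
      ext x
      simp only [mem_inter, mem_image, mem_filter]
      constructor
      · rintro ⟨⟨j, hj, rfl⟩, hxt⟩
        exact ⟨j, ⟨hj, hxt⟩, rfl⟩
      · rintro ⟨j, ⟨hj, hxt⟩, rfl⟩
        exact ⟨⟨j, hj, rfl⟩, hxt⟩
    rw [himg, card_image_of_injOn (hinjOn.mono (coe_subset.mpr (filter_subset _ _)))]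
  have hcard1 : (Vset p v ∩ C1 p f g b).card
      = ((range p).filter (fun j => rfun j < M / 2)).card := by
    rw [hIC]
    exact congrArg card (filter_congr hchar1)
  have hcard0 : (Vset p v ∩ C0 p f g b).card
      = ((range p).filter (fun j => ¬ rfun j < M / 2)).card := by
    rw [hIC]
    exact congrArg card (filter_congr hchar0)
  have hsplit : ((range p).filter (fun j => rfun j < M / 2)).card
      + ((range p).filter (fun j => ¬ rfun j < M / 2)).card = p := by
    rw [card_filter_add_card_filter_not, card_range]
  -- counting
  set a' := (m + (M - b % M)) % f with ha'
  have ha'f : a' < f := Nat.mod_lt _ hfpos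
  have hecop : Nat.gcd p e = 1 := by
    have hele : e ≤ p - 1 := Nat.le_of_dvd (by omega) ⟨f, hef.symm⟩
    have hnd : ¬ p ∣ e := fun hdvd => by
      have := Nat.le_of_dvd he hdvd; omega
    exact hp.coprime_iff_not_dvd.mpr hnd
  have hrinj : Set.InjOn rfun (range p) := by
    intro j hj j' hj' hjj
    simp only [coe_range, Set.mem_Iio] at hj hj'
    simp only [hrfun] at hjj
    have h0 : m + j * (p - 1) + (M - b % M) ≡ m + j' * (p - 1) + (M - b % M) [MOD M] := hjj
    have h1 : m + j * (p - 1) ≡ m + j' * (p - 1) [MOD M] := h0.add_right_cancel' _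
    have h1' : j * (p - 1) ≡ j' * (p - 1) [MOD M] := h1.add_left_cancel' m
    have h2 : j * e * f ≡ j' * e * f [MOD p * f] := by
      have hrw : ∀ x : ℕ, x * (p - 1) = x * e * f := by
        intro x; rw [← hef]; ring
      rw [hMdef] at h1'
      rwa [hrw j, hrw j'] at h1'
    have h3 : j * e ≡ j' * e [MOD p] :=
      Nat.ModEq.mul_right_cancel' (by omega) h2
    have h4 : j ≡ j' [MOD p] := Nat.ModEq.cancel_right_of_coprime hecop h3
    exact h4.eq_of_lt_of_lt hj hj'
  have hrimg : (range p).image rfun = (range M).filter (fun r => r % f = a') := by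
    have hsub : (range p).image rfun ⊆ (range M).filter (fun r => r % f = a') := by
      intro x hx
      rw [mem_image] at hx
      obtain ⟨j, hj, rfl⟩ := hx
      rw [mem_filter, mem_range]
      refine ⟨hrlt j, ?_⟩
      simp only [hrfun]
      rw [Nat.mod_mod_of_dvd _ hfM]
      have hrw : m + j * (p - 1) + (M - b % M) = m + (M - b % M) + j * e * f := by
        rw [← hef]; ring
      rw [hrw, Nat.add_mul_mod_self_right, ← ha']
    have hc2 : ((range M).filter (fun r => r % f = a')).card = p := by
      have hM0 : M = p * f + 0 := by rw [hMdef, Nat.add_zero]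
      rw [hM0, count_mod_card f a' p 0 ha'f (Nat.zero_le f)]
      simp
    have hc1 : ((range p).image rfun).card = p := by
      rw [card_image_of_injOn hrinj, card_range]
    exact eq_of_subset_of_card_le hsub (hc2.le.trans hc1.ge)
  have hhalfle : M / 2 ≤ M := Nat.div_le_self _ _
  have hhalf : M / 2 = (p - 1) / 2 * f + f / 2 := by
    have h1 : M = 2 * ((2 * s + 1) * t) := by rw [hMdef, hps, hft]; ring
    have h2 : (p - 1) / 2 = s := by omega
    have h3 : f / 2 = t := by omega
    rw [h1, Nat.mul_div_cancel_left _ (by norm_num), h2, h3, hft]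
    ring
  have hcnt1 : ((range p).filter (fun j => rfun j < M / 2)).card
      = if a' < f / 2 then (p - 1) / 2 + 1 else (p - 1) / 2 := by
    have h1 : ((range p).filter (fun j => rfun j < M / 2)).image rfun
        = ((range M).filter (fun r => r % f = a')).filter (fun r => r < M / 2) := by
      rw [← hrimg]
      ext x
      simp only [mem_image, mem_filter, mem_range]
      constructor
      · rintro ⟨j, ⟨hj, hlt⟩, rfl⟩
        exact ⟨⟨j, hj, rfl⟩, hlt⟩
      · rintro ⟨⟨j, hj, rfl⟩, hlt⟩
        exact ⟨j, ⟨hj, hlt⟩, rfl⟩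
    have h2 : ((range M).filter (fun r => r % f = a')).filter (fun r => r < M / 2)
        = (range (M / 2)).filter (fun r => r % f = a') := by
      ext r
      simp only [mem_filter, mem_range]
      constructor
      · rintro ⟨⟨_, hmod⟩, hlt⟩
        exact ⟨hlt, hmod⟩
      · rintro ⟨hlt, hmod⟩
        exact ⟨⟨lt_of_lt_of_le hlt hhalfle, hmod⟩, hlt⟩
    calc ((range p).filter (fun j => rfun j < M / 2)).card
        = (((range p).filter (fun j => rfun j < M / 2)).image rfun).card :=
          (card_image_of_injOn (hrinj.mono (coe_subset.mpr (filter_subset _ _)))).symm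
      _ = ((range (M / 2)).filter (fun r => r % f = a')).card := by rw [h1, h2]
      _ = if a' < f / 2 then (p - 1) / 2 + 1 else (p - 1) / 2 := by
          rw [hhalf]
          exact count_mod_card f a' ((p - 1) / 2) (f / 2) ha'f (Nat.div_le_self _ _)
  -- Q_b membership criterion
  have hvg : g ^ m % p = v := by
    apply natcast_inj_of_lt (Nat.mod_lt _ (show 0 < p by omega)) hvlt
    rw [ZMod.natCast_mod]
    push_cast
    exact hm'
  have hQiff : v ∈ Qb p f g b ↔ (m + (f - b % f)) % f < f / 2 := by
    constructor
    · intro hx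
      simp only [Qb, mem_biUnion] at hx
      obtain ⟨i, hi, hxi⟩ := hx
      rw [mem_range] at hi
      have hxi' : g ^ m % p ∈ Dcl p f g 1 ((i + b) % f) := by rw [hvg]; exact hxi
      have hcond := (hD1 ((i + b) % f) m (Nat.mod_lt _ hfpos) hmlt).mp hxi'
      exact ((shift_count f b m 0 (f / 2) hfpos (Nat.div_le_self _ _)).mp
        ⟨i, ⟨Nat.zero_le _, hi⟩, hcond⟩).2
    · intro hr
      obtain ⟨i, ⟨_, hi⟩, hcond⟩ := (shift_count f b m 0 (f / 2) hfpos
        (Nat.div_le_self _ _)).mpr ⟨Nat.zero_le _, hr⟩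
      simp only [Qb, mem_biUnion]
      refine ⟨i, mem_range.mpr hi, ?_⟩
      rw [← hvg]
      exact (hD1 ((i + b) % f) m (Nat.mod_lt _ hfpos) hmlt).mpr hcond
  have haa : (m + (f - b % f)) % f = a' := by
    have e1 : b % M ≡ b % f [MOD f] := by
      unfold Nat.ModEq
      rw [Nat.mod_mod_of_dvd _ hfM, Nat.mod_mod_of_dvd _ (dvd_refl f)]
    have hbMlt : b % M < M := Nat.mod_lt _ hM
    have hbflt : b % f < f := Nat.mod_lt _ hfpos
    have h1 : (M - b % M) + b % f ≡ 0 [MOD f] := by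
      calc (M - b % M) + b % f ≡ (M - b % M) + b % M [MOD f] := Nat.ModEq.add_left _ e1.symm
        _ = M := by omega
        _ ≡ 0 [MOD f] := Nat.modEq_zero_iff_dvd.mpr hfM
    have h2 : (f - b % f) + b % f ≡ 0 [MOD f] := by
      have hx : (f - b % f) + b % f = f := by omega
      rw [hx]
      exact Nat.modEq_zero_iff_dvd.mpr (dvd_refl f)
    have h3 : (f - b % f) ≡ (M - b % M) [MOD f] :=
      Nat.ModEq.add_right_cancel' _ (h2.trans h1.symm)
    have h4 := Nat.ModEq.add_left m h3
    rw [ha']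
    exact h4
  have hNiff : v ∈ Nb p f g b ↔ ¬ v ∈ Qb p f g b := by
    rw [Nb, mem_sdiff, mem_Ico]
    constructor
    · rintro ⟨_, h⟩; exact h
    · intro h; exact ⟨⟨hv1, hvlt⟩, h⟩
  constructor
  · intro hvQ
    have ha : a' < f / 2 := by rw [← haa]; exact hQiff.mp hvQ
    constructor
    · rw [hcard0]
      have hcnt := hcnt1
      rw [if_pos ha] at hcnt
      omega
    · rw [hcard1, hcnt1, if_pos ha]
      omega
  · intro hvN
    have hnQ : ¬ v ∈ Qb p f g b := hNiff.mp hvN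
    have ha : ¬ a' < f / 2 := by
      intro h
      exact hnQ (hQiff.mpr (by rw [haa]; exact h))
    constructor
    · rw [hcard0]
      have hcnt := hcnt1
      rw [if_neg ha] at hcnt
      omega
    · rw [hcard1, hcnt1, if_neg ha]
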